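/- (Theorem 3.1, Part 2.) Let k be a positive integer, let φ : (0,∞) → ℝ be continuous, and let z : (0,∞) → ℝ be twice differentiable with z(u) ≠ 0 for all u > 0, satisfying z″(u) + ((k−1)/u)·z′(u) − (φ(u)/2)·z(u) = 0 for all u > 0. Define F(u) := z(u)² · u^{(k−1)/2} · exp(u²/2). Then Q_k[F](u) = φ(u) for all u > 0; in particular, if φ(u) ≤ 0 for all u > 0 then F satisfies Q_k[F](u) ≤ 0 for all u > 0, where Q_k[F](u) := F″(u)/F(u) − (1/2)(F′(u)/F(u))² + (F′(u)/F(u))·((k−1)/(2u) − u) + (k−1)(7−3k)/(8u²) + u²/2 − (k+1)/2. -/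

import Mathlib

open Real

/-- The Riccati-type expression `Q_k[F](u)` of the paper. -/
noncomputable def Q (k : ℕ) (F : ℝ → ℝ) (u : ℝ) : ℝ :=
  deriv (deriv F) u / F u - (1 / 2) * (deriv F u / F u) ^ 2
    + (deriv F u / F u) * ((k - 1) / (2 * u) - u)
    + (k - 1) * (7 - 3 * k) / (8 * u ^ 2) + u ^ 2 / 2 - (k + 1) / 2

theorem stmt6 (k : ℕ) (hk : 0 < k) (φ : ℝ → ℝ)
    (hφ : ContinuousOn φ (Set.Ioi (0 : ℝ)))
    (z : ℝ → ℝ)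
    (hz : ∀ u > (0 : ℝ), DifferentiableAt ℝ z u ∧ DifferentiableAt ℝ (deriv z) u)
    (hz0 : ∀ u > (0 : ℝ), z u ≠ 0)
    (hode : ∀ u > (0 : ℝ),
      deriv (deriv z) u + ((k - 1) / u) * deriv z u - (φ u / 2) * z u = 0)
    (F : ℝ → ℝ)
    (hF : ∀ u : ℝ, F u = z u ^ 2 * u ^ (((k : ℝ) - 1) / 2) * Real.exp (u ^ 2 / 2)) :
    (∀ u > (0 : ℝ), Q k F u = φ u) ∧
    ((∀ u > (0 : ℝ), φ u ≤ 0) → ∀ u > (0 : ℝ), Q k F u ≤ 0) := by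
  have key : ∀ u > (0 : ℝ), Q k F u = φ u := by
    intro u hu
    have hu0 : u ≠ 0 := ne_of_gt hu
    set a : ℝ := ((k : ℝ) - 1) / 2 with ha
    have hFfun : F = fun y => z y ^ 2 * y ^ a * Real.exp (y ^ 2 / 2) := funext hF
    -- helpers at a general point x > 0
    have hsq : ∀ x : ℝ, 0 < x → HasDerivAt (fun y => z y ^ 2) (2 * z x * deriv z x) x := by
      intro x hx
      have h := ((hz x hx).1.hasDerivAt).pow 2
      refine h.congr_deriv ?_
      push_cast
      ring
    have hpw : ∀ x : ℝ, 0 < x → HasDerivAt (fun y : ℝ => y ^ a) (a * x ^ (a - 1)) x := by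
      intro x hx
      exact Real.hasDerivAt_rpow_const (Or.inl (ne_of_gt hx))
    have hex : ∀ x : ℝ, HasDerivAt (fun y : ℝ => Real.exp (y ^ 2 / 2))
        (x * Real.exp (x ^ 2 / 2)) x := by
      intro x
      have h2 : HasDerivAt (fun y : ℝ => y ^ 2 / 2) x x := by
        have := (hasDerivAt_pow 2 x).div_const 2
        refine this.congr_deriv ?_
        push_cast; ring
      have := h2.exp
      convert this using 1
      ring
    -- first derivative of F at any x > 0
    have hFx : ∀ x : ℝ, 0 < x → HasDerivAt F
        ((2 * z x * deriv z x * x ^ a + z x ^ 2 * (a * x ^ (a - 1))) * Real.exp (x ^ 2 / 2)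
          + z x ^ 2 * x ^ a * (x * Real.exp (x ^ 2 / 2))) x := by
      intro x hx
      rw [hFfun]
      exact ((hsq x hx).mul (hpw x hx)).mul (hex x)
    set G : ℝ → ℝ := fun x =>
      (2 * z x * deriv z x * x ^ a + z x ^ 2 * (a * x ^ (a - 1))) * Real.exp (x ^ 2 / 2)
        + z x ^ 2 * x ^ a * (x * Real.exp (x ^ 2 / 2)) with hGdef
    have hev : deriv F =ᶠ[nhds u] G := by
      filter_upwards [Ioi_mem_nhds hu] with x hx
      exact (hFx x hx).deriv
    have hdF : deriv F u = G u := (hFx u hu).deriv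
    -- pieces at u
    have hzd := (hz u hu).1.hasDerivAt
    have hzd2 := (hz u hu).2.hasDerivAt
    have h1u := hsq u hu
    have hpu := hpw u hu
    have heu := hex u
    have hp1 : HasDerivAt (fun y : ℝ => y ^ (a - 1)) ((a - 1) * u ^ (a - 1 - 1)) u :=
      Real.hasDerivAt_rpow_const (Or.inl hu0)
    have hA : HasDerivAt (fun y => 2 * z y * deriv z y)
        (2 * deriv z u * deriv z u + 2 * z u * deriv (deriv z) u) u := by
      exact (hzd.const_mul 2).mul hzd2
    have hGD := (((hA.mul hpu).add (h1u.mul (hp1.const_mul a))).mul heu).add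
      ((h1u.mul hpu).mul ((hasDerivAt_id' u).mul heu))
    have hd2 : deriv (deriv F) u = deriv G u := hev.deriv_eq
    have hd3 : deriv G u = _ := hGD.deriv
    -- the ODE
    have hzz : deriv (deriv z) u = (φ u / 2) * z u - (((k : ℝ) - 1) / u) * deriv z u := by
      have := hode u hu
      linarith
    -- rpow simplifications
    have hr1 : u ^ (a - 1) = u ^ a / u := Real.rpow_sub_one hu0 a
    have hr2 : u ^ (a - 1 - 1) = u ^ a / u / u := by
      rw [Real.rpow_sub_one hu0, hr1]
    have hPne : u ^ a ≠ 0 := (Real.rpow_pos_of_pos hu a).ne'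
    have hene : Real.exp (u ^ 2 / 2) ≠ 0 := Real.exp_ne_zero _
    have hzne : z u ≠ 0 := hz0 u hu
    rw [Q, hd2, hd3, hdF, hF u, hGdef]
    simp only [hzz, hr1, hr2, Pi.mul_apply, Pi.add_apply]
    rw [ha]
    field_simp
    ring
  refine ⟨key, fun hneg u hu => ?_⟩
  rw [key u hu]
  exact hneg u hu
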